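/- Let A be a proper symmetric 3×3 advantage matrix with a₁₂ = a₂₁ = a, a₁₃ = a₃₁ = b, a₂₃ = a₃₂ = c, where a, b, c > 0, and let F : S₃ → S₃ be the associated Variational Learning dynamics. Then none of the vertex fixed points v₁ = (1,0,0), v₂ = (0,1,0), v₃ = (0,0,1) is asymptotically stable: for each vertex v_i and every relative neighbourhood U of v_i in S₃, there exists q ∈ U such that the iterates Fⁿ(q) do not converge to v_i. -/

import Mathlib

open Finset Filter Topology

/-- The simplex `S₃` of probability vectors over three grammars. -/
def simplex3 : Set (Fin 3 → ℝ) :=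
  {p | (∀ i, 0 ≤ p i) ∧ ∑ i, p i = 1}

/-- The penalty probability `c_i(p) = ∑_{j ≠ i} a_{ij} p_j`. -/
def penalty (A : Matrix (Fin 3) (Fin 3) ℝ) (p : Fin 3 → ℝ) (i : Fin 3) : ℝ :=
  ∑ j ∈ Finset.univ.filter (fun j => j ≠ i), A i j * p j

/-- The Variational Learning dynamics
`F_i(p) = ∏_{j ≠ i} c_j(p) / ∑_m ∏_{k ≠ m} c_k(p)`. -/
noncomputable def VLdyn (A : Matrix (Fin 3) (Fin 3) ℝ) (p : Fin 3 → ℝ) (i : Fin 3) : ℝ :=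
  (∏ j ∈ Finset.univ.filter (fun j => j ≠ i), penalty A p j) /
    (∑ m, ∏ k ∈ Finset.univ.filter (fun k => k ≠ m), penalty A p k)

/-- The vertex `v_i` of the simplex, i.e. the state of total dominance of grammar `G_i`. -/
def vertex (i : Fin 3) : Fin 3 → ℝ := fun j => if j = i then 1 else 0

/-- The key quantitative estimate: writing `x` for the mass at the vertex under study and
`y, z` for the other two masses, one step of the dynamics keeps the total escaping mass
`y + z` above `min (y + z) η` for a fixed positive threshold `η`. -/
lemma core (α β γ : ℝ) (hα : 0 < α) (hβ : 0 < β) (hγ : 0 < γ) :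
    ∃ η : ℝ, 0 < η ∧ ∀ x y z : ℝ, 0 ≤ x → 0 ≤ y → 0 ≤ z → x + y + z = 1 →
      0 < (α*x+γ*z)*(β*x+γ*y) + (α*y+β*z)*(β*x+γ*y) + (α*y+β*z)*(α*x+γ*z) ∧
      min (y + z) η ≤ ((α*y+β*z)*(β*x+γ*y) + (α*y+β*z)*(α*x+γ*z)) /
        ((α*x+γ*z)*(β*x+γ*y) + (α*y+β*z)*(β*x+γ*y) + (α*y+β*z)*(α*x+γ*z)) := by
  obtain ⟨m, hm⟩ : ∃ m, m = min α β := ⟨_, rfl⟩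
  obtain ⟨K, hK⟩ : ∃ K, K = α + β + γ := ⟨_, rfl⟩
  obtain ⟨L, hL⟩ : ∃ L, L = min (α + β) γ := ⟨_, rfl⟩
  have hm0 : 0 < m := hm ▸ lt_min hα hβ
  have hK0 : 0 < K := by rw [hK]; positivity
  have hL0 : 0 < L := hL ▸ lt_min (by positivity) hγ
  have hmα : m ≤ α := hm ▸ min_le_left _ _
  have hmβ : m ≤ β := hm ▸ min_le_right _ _
  have hLab : L ≤ α + β := hL ▸ min_le_left _ _
  have hLγ : L ≤ γ := hL ▸ min_le_right _ _
  obtain ⟨δ, hδ⟩ : ∃ δ : ℝ, δ = min (1/2) (m^2/(4*γ*K)) := ⟨_, rfl⟩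
  have hδ0 : 0 < δ := hδ ▸ lt_min (by norm_num) (by positivity)
  have hδhalf : δ ≤ 1/2 := hδ ▸ min_le_left _ _
  have hδK : γ * K * δ ≤ m^2/4 := by
    have h : δ ≤ m^2/(4*γ*K) := hδ ▸ min_le_right _ _
    calc γ * K * δ ≤ γ * K * (m^2/(4*γ*K)) :=
          mul_le_mul_of_nonneg_left h (by positivity)
      _ = m^2/4 := by field_simp
  refine ⟨min δ (m*δ*L/(2*K^2)), lt_min hδ0 (by positivity), ?_⟩
  intro x y z hx hy hz hsum
  obtain ⟨s, hs⟩ : ∃ s, s = y + z := ⟨_, rfl⟩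
  have hxs : x = 1 - s := by rw [hs]; linarith only [hsum]
  have hs0 : 0 ≤ s := by rw [hs]; positivity
  have hs1 : s ≤ 1 := by linarith only [hxs, hx]
  obtain ⟨ci, hci⟩ : ∃ ci, ci = α*y + β*z := ⟨_, rfl⟩
  obtain ⟨cj, hcj⟩ : ∃ cj, cj = α*x + γ*z := ⟨_, rfl⟩
  obtain ⟨ck, hck⟩ : ∃ ck, ck = β*x + γ*y := ⟨_, rfl⟩
  rw [← hci, ← hcj, ← hck, ← hs]
  have hci0 : 0 ≤ ci := by rw [hci]; positivity
  have hcj0 : 0 ≤ cj := by rw [hcj]; positivity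
  have hck0 : 0 ≤ ck := by rw [hck]; positivity
  have h1 : m * s ≤ ci := by
    rw [hci, hs]
    nlinarith only [hmα, hmβ, hy, hz]
  have h3 : L ≤ cj + ck := by
    rw [hcj, hck]
    have p1 : L*x ≤ (α+β)*x := mul_le_mul_of_nonneg_right hLab hx
    have p2 : L*(y+z) ≤ γ*(y+z) := mul_le_mul_of_nonneg_right hLγ (add_nonneg hy hz)
    have e : L*x + L*(y+z) = L := by linear_combination L * hsum
    linarith only [p1, p2, e]
  have eα : α*x + α*(y+z) = α := by linear_combination α * hsum
  have eβ : β*x + β*(y+z) = β := by linear_combination β * hsum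
  have eγ : γ*x + γ*(y+z) = γ := by linear_combination γ * hsum
  have h4 : cj + ck ≤ K := by
    rw [hcj, hck, hK]
    linarith only [eα, eβ, eγ, mul_nonneg hα.le (add_nonneg hy hz),
      mul_nonneg hβ.le (add_nonneg hy hz), mul_nonneg hγ.le hx]
  have hD : 0 < cj*ck + ci*ck + ci*cj := by
    rcases eq_or_lt_of_le hs0 with h0 | h0
    · have hy0 : y = 0 := by rw [hs] at h0; linarith only [h0, hy, hz]
      have hz0 : z = 0 := by rw [hs] at h0; linarith only [h0, hy, hz]
      have hx1 : x = 1 := by linarith only [hxs, h0]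
      have hjk : cj * ck = α * β := by rw [hcj, hck, hy0, hz0, hx1]; ring
      have q1 := mul_nonneg hci0 hck0
      have q2 := mul_nonneg hci0 hcj0
      linarith only [hjk, q1, q2, mul_pos hα hβ]
    · have hci' : 0 < ci := lt_of_lt_of_le (by positivity) h1
      have h5 : 0 < ci * (cj + ck) := mul_pos hci' (lt_of_lt_of_le hL0 h3)
      have hr : ci*ck + ci*cj = ci*(cj+ck) := by ring
      linarith only [h5, hr, mul_nonneg hcj0 hck0]
  refine ⟨hD, ?_⟩
  rcases le_or_gt s δ with hcase | hcase
  · -- contraction region: the escaping mass does not decrease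
    refine le_trans (min_le_left _ _) ?_
    rw [le_div_iff₀ hD]
    have key : s * (cj * ck) ≤ (1 - s) * (ci * (cj + ck)) := by
      have hb5 : cj ≤ α*(1-s) + γ*s := by
        rw [hcj, hxs, hs]
        nlinarith only [mul_nonneg hγ.le hy]
      have hb6 : ck ≤ β*(1-s) + γ*s := by
        rw [hck, hxs, hs]
        nlinarith only [mul_nonneg hγ.le hz]
      have hid : m * (α + β) = α*β + m^2 := by
        rcases min_choice α β with h | h <;> rw [hm, h] <;> ring
      have hγKs : γ * K * s ≤ m^2 / 4 :=
        le_trans (mul_le_mul_of_nonneg_left hcase (by positivity)) hδK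
      have hhalf : s ≤ 1/2 := le_trans hcase hδhalf
      have hq : (α*(1-s) + γ*s) * (β*(1-s) + γ*s) ≤ m*(α+β)*(1-s)^2 := by
        have e1 : γ*(α+β)*(s*(1-s)) ≤ γ*(α+β)*s := by
          nlinarith only [mul_nonneg (mul_nonneg hγ.le
            (by linarith only [hα, hβ] : (0:ℝ) ≤ α+β)) (mul_nonneg hs0 hs0)]
        have e2 : γ^2*s^2 ≤ γ^2*s := by
          nlinarith only [mul_nonneg (mul_nonneg hγ.le hγ.le)
            (mul_nonneg hs0 (by linarith only [hs1] : 0 ≤ 1 - s))]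
        have e3 : m^2/4 ≤ m^2*(1-s)^2 := by
          have q : 0 ≤ (1-s)^2 - 1/4 := by
            have := mul_nonneg (by linarith only [hhalf] : (0:ℝ) ≤ 1/2 - s)
              (by linarith only [hs1] : (0:ℝ) ≤ 3/2 - s)
            nlinarith only [this]
          nlinarith only [mul_nonneg (sq_nonneg m) q]
        have eK : γ*K*s = γ*(α+β+γ)*s := by rw [hK]
        nlinarith only [e1, e2, e3, hγKs, hid, eK]
      have hlow : (α+β)*(1-s) ≤ cj + ck := by
        rw [hcj, hck, hxs, hs]
        nlinarith only [mul_nonneg hγ.le hy, mul_nonneg hγ.le hz]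
      have c1 : s * (cj * ck) ≤ s * ((α*(1-s)+γ*s) * (β*(1-s)+γ*s)) := by
        apply mul_le_mul_of_nonneg_left _ hs0
        apply mul_le_mul hb5 hb6 hck0
        nlinarith only [hα.le, hγ.le, hs0, hs1,
          mul_nonneg hα.le (by linarith only [hs1] : 0 ≤ 1-s), mul_nonneg hγ.le hs0]
      have c2 : s * ((α*(1-s)+γ*s) * (β*(1-s)+γ*s)) ≤ s * (m*(α+β)*(1-s)^2) :=
        mul_le_mul_of_nonneg_left hq hs0
      have c3 : s * (m*(α+β)*(1-s)^2) = (1-s) * ((m*s) * ((α+β)*(1-s))) := by ring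
      have c4 : (1-s) * ((m*s) * ((α+β)*(1-s))) ≤ (1-s) * (ci * (cj+ck)) := by
        apply mul_le_mul_of_nonneg_left _ (by linarith only [hs1] : 0 ≤ 1-s)
        apply mul_le_mul h1 hlow _ hci0
        apply mul_nonneg (by linarith only [hα, hβ] : (0:ℝ) ≤ α+β) (by linarith only [hs1])
      linarith only [c1, c2, c3, c4]
    nlinarith only [key]
  · -- away from the vertex: the escaping mass stays above a fixed threshold
    refine le_trans (min_le_right _ _) (le_trans (min_le_right _ _) ?_)
    have hnum : ci*ck + ci*cj = ci * (cj + ck) := by ring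
    rw [hnum]
    have hDle : cj*ck + ci*ck + ci*cj ≤ 2*K^2 := by
      have hcjK : cj ≤ K := by linarith only [h4, hck0]
      have hckK : ck ≤ K := by linarith only [h4, hcj0]
      have hciK : ci ≤ K := by
        rw [hci, hK]
        linarith only [eα, eβ, mul_nonneg hα.le (add_nonneg hx hz),
          mul_nonneg hβ.le (add_nonneg hx hy), hγ,
          mul_nonneg hα.le hy, mul_nonneg hβ.le hz]
      have p1 : cj*ck ≤ K*K := mul_le_mul hcjK hckK hck0 hK0.le
      have p2 : ci*(cj+ck) ≤ K*K := mul_le_mul hciK h4 (add_nonneg hcj0 hck0) hK0.le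
      have hr : ci*ck + ci*cj = ci*(cj+ck) := by ring
      nlinarith only [p1, p2, hr]
    have hnumge : m*δ*L ≤ ci * (cj + ck) := by
      have hmδ : m * δ ≤ ci := by
        refine le_trans ?_ h1
        exact mul_le_mul_of_nonneg_left hcase.le hm0.le
      exact mul_le_mul hmδ h3 hL0.le hci0
    exact div_le_div₀ (mul_nonneg hci0 (le_trans hL0.le h3)) hnumge hD hDle

/-- Abstract instability of a vertex for a dynamics whose components have the
variational-learning form with respect to some labelling `i, j, k` of the coordinates. -/
lemma vertex_unstable (α β γ : ℝ) (hα : 0 < α) (hβ : 0 < β) (hγ : 0 < γ)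
    (G : (Fin 3 → ℝ) → Fin 3 → ℝ) (i j k : Fin 3)
    (hij : i ≠ j) (hik : i ≠ k) (hjk : j ≠ k) (hall : ∀ l : Fin 3, l = i ∨ l = j ∨ l = k)
    (hGi : ∀ p ∈ simplex3, G p i = ((α*p i+γ*p k)*(β*p i+γ*p j)) /
      ((α*p i+γ*p k)*(β*p i+γ*p j) + (α*p j+β*p k)*(β*p i+γ*p j) + (α*p j+β*p k)*(α*p i+γ*p k)))
    (hGj : ∀ p ∈ simplex3, G p j = ((α*p j+β*p k)*(β*p i+γ*p j)) /
      ((α*p i+γ*p k)*(β*p i+γ*p j) + (α*p j+β*p k)*(β*p i+γ*p j) + (α*p j+β*p k)*(α*p i+γ*p k)))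
    (hGk : ∀ p ∈ simplex3, G p k = ((α*p j+β*p k)*(α*p i+γ*p k)) /
      ((α*p i+γ*p k)*(β*p i+γ*p j) + (α*p j+β*p k)*(β*p i+γ*p j) + (α*p j+β*p k)*(α*p i+γ*p k))) :
    ∀ U ∈ 𝓝[simplex3] (vertex i), ∃ q ∈ U,
      ¬ Tendsto (fun n => G^[n] q) atTop (𝓝 (vertex i)) := by
  obtain ⟨η, hη0, hcore⟩ := core α β γ hα hβ hγ
  have huniv : (Finset.univ : Finset (Fin 3)) = {i, j, k} := by
    ext l
    simpa using hall l
  have hsum3 : ∀ f : Fin 3 → ℝ, ∑ l, f l = f i + f j + f k := by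
    intro f
    rw [huniv, Finset.sum_insert (by simp [hij, hik]),
      Finset.sum_insert (by simp [hjk]), Finset.sum_singleton]
    ring
  -- one step of the dynamics
  have step : ∀ p ∈ simplex3, G p ∈ simplex3 ∧
      min (p j + p k) η ≤ G p j + G p k := by
    rintro p ⟨hp0, hp1⟩
    have hsum : p i + p j + p k = 1 := by rw [← hsum3 p]; exact hp1
    obtain ⟨hD, hmin⟩ := hcore (p i) (p j) (p k) (hp0 i) (hp0 j) (hp0 k) hsum
    have hnn : ∀ l, 0 ≤ G p l := by
      intro l
      have hpiece : ∀ u v : ℝ, 0 ≤ u → 0 ≤ v → 0 ≤ (u * v) /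
          ((α*p i+γ*p k)*(β*p i+γ*p j) + (α*p j+β*p k)*(β*p i+γ*p j) +
            (α*p j+β*p k)*(α*p i+γ*p k)) := by
        intro u v hu hv
        exact div_nonneg (mul_nonneg hu hv) hD.le
      have h1 : (0:ℝ) ≤ α*p i+γ*p k :=
        add_nonneg (mul_nonneg hα.le (hp0 i)) (mul_nonneg hγ.le (hp0 k))
      have h2 : (0:ℝ) ≤ β*p i+γ*p j :=
        add_nonneg (mul_nonneg hβ.le (hp0 i)) (mul_nonneg hγ.le (hp0 j))
      have h3 : (0:ℝ) ≤ α*p j+β*p k :=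
        add_nonneg (mul_nonneg hα.le (hp0 j)) (mul_nonneg hβ.le (hp0 k))
      rcases hall l with rfl | rfl | rfl
      · rw [hGi p ⟨hp0, hp1⟩]; exact hpiece _ _ h1 h2
      · rw [hGj p ⟨hp0, hp1⟩]; exact hpiece _ _ h3 h2
      · rw [hGk p ⟨hp0, hp1⟩]; exact hpiece _ _ h3 h1
    refine ⟨⟨hnn, ?_⟩, ?_⟩
    · rw [hsum3 (G p), hGi p ⟨hp0, hp1⟩, hGj p ⟨hp0, hp1⟩, hGk p ⟨hp0, hp1⟩,
        ← add_div, ← add_div]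
      exact div_self hD.ne'
    · rw [hGj p ⟨hp0, hp1⟩, hGk p ⟨hp0, hp1⟩, ← add_div]
      exact hmin
  -- the neighbourhood contains a small perturbation of the vertex
  intro U hU
  rw [Metric.mem_nhdsWithin_iff] at hU
  obtain ⟨ε, hε0, hεU⟩ := hU
  obtain ⟨t, ht0, htε, ht1⟩ : ∃ t : ℝ, 0 < t ∧ t < ε ∧ t ≤ 1/2 :=
    ⟨min (ε/2) (1/2), lt_min (by linarith) (by norm_num),
      lt_of_le_of_lt (min_le_left _ _) (by linarith), min_le_right _ _⟩
  set q : Fin 3 → ℝ := fun l => if l = i then 1 - t else if l = j then t else 0 with hq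
  have hqi : q i = 1 - t := by simp [hq]
  have hqj : q j = t := by simp [hq, hij.symm]
  have hqk : q k = 0 := by simp [hq, hik.symm, hjk.symm]
  have hqsimplex : q ∈ simplex3 := by
    constructor
    · intro l
      rcases hall l with rfl | rfl | rfl
      · rw [hqi]; linarith
      · rw [hqj]; linarith
      · rw [hqk]
    · rw [hsum3 q, hqi, hqj, hqk]; ring
  have hqU : q ∈ U := by
    apply hεU
    refine ⟨?_, hqsimplex⟩
    rw [Metric.mem_ball, dist_pi_lt_iff hε0]
    intro l
    have hv1 : vertex i i = 1 := if_pos rfl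
    have hv2 : vertex i j = 0 := if_neg hij.symm
    have hv3 : vertex i k = 0 := if_neg hik.symm
    rcases hall l with rfl | rfl | rfl
    · rw [hqi, hv1, Real.dist_eq, abs_of_nonpos (by linarith)]
      linarith
    · rw [hqj, hv2, Real.dist_eq, abs_of_nonneg (by linarith : (0:ℝ) ≤ t - 0)]
      linarith
    · rw [hqk, hv3]
      simpa using hε0
  refine ⟨q, hqU, ?_⟩
  -- the invariant along the orbit
  have horbit : ∀ n : ℕ, G^[n] q ∈ simplex3 ∧ min t η ≤ (G^[n] q) j + (G^[n] q) k := by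
    intro n
    induction n with
    | zero =>
      refine ⟨hqsimplex, ?_⟩
      simp only [Function.iterate_zero, id_eq]
      rw [hqj, hqk]
      simpa using min_le_left t η
    | succ n ih =>
      obtain ⟨hmem, hge⟩ := ih
      obtain ⟨hmem', hge'⟩ := step _ hmem
      rw [Function.iterate_succ_apply']
      refine ⟨hmem', le_trans ?_ hge'⟩
      exact le_min hge (min_le_right _ _)
  intro htend
  have hj' : Tendsto (fun n => (G^[n] q) j) atTop (𝓝 (vertex i j)) := tendsto_pi_nhds.1 htend j
  have hk' : Tendsto (fun n => (G^[n] q) k) atTop (𝓝 (vertex i k)) := tendsto_pi_nhds.1 htend k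
  have hvj : vertex i j = 0 := if_neg hij.symm
  have hvk : vertex i k = 0 := if_neg hik.symm
  have hsum0 : Tendsto (fun n => (G^[n] q) j + (G^[n] q) k) atTop (𝓝 0) := by
    have := hj'.add hk'
    rwa [hvj, hvk, add_zero] at this
  have hle : min t η ≤ 0 :=
    ge_of_tendsto hsum0 (Filter.Eventually.of_forall fun n => (horbit n).2)
  have : 0 < min t η := lt_min ht0 hη0
  linarith

theorem stmt_15 (a b c : ℝ) (ha : 0 < a) (hb : 0 < b) (hc : 0 < c)
    (A : Matrix (Fin 3) (Fin 3) ℝ)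
    (hA : A = !![0, a, b; a, 0, c; b, c, 0]) :
    ∀ i : Fin 3, ∀ U ∈ 𝓝[simplex3] (vertex i), ∃ q ∈ U,
      ¬ Tendsto (fun n => (VLdyn A)^[n] q) atTop (𝓝 (vertex i)) := by
  have pen0 : ∀ p : Fin 3 → ℝ, penalty A p 0 = a*p 1 + b*p 2 := by
    intro p; subst hA; simp [penalty, Finset.sum_filter, Fin.sum_univ_three]
  have pen1 : ∀ p : Fin 3 → ℝ, penalty A p 1 = a*p 0 + c*p 2 := by
    intro p; subst hA; simp [penalty, Finset.sum_filter, Fin.sum_univ_three]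
  have pen2 : ∀ p : Fin 3 → ℝ, penalty A p 2 = b*p 0 + c*p 1 := by
    intro p; subst hA; simp [penalty, Finset.sum_filter, Fin.sum_univ_three]
  have VL0 : ∀ p : Fin 3 → ℝ, VLdyn A p 0 = (penalty A p 1 * penalty A p 2) /
      (penalty A p 1 * penalty A p 2 + penalty A p 0 * penalty A p 2 +
        penalty A p 0 * penalty A p 1) := by
    intro p; simp [VLdyn, Finset.prod_filter, Fin.sum_univ_three, Fin.prod_univ_three]
  have VL1 : ∀ p : Fin 3 → ℝ, VLdyn A p 1 = (penalty A p 0 * penalty A p 2) /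
      (penalty A p 1 * penalty A p 2 + penalty A p 0 * penalty A p 2 +
        penalty A p 0 * penalty A p 1) := by
    intro p; simp [VLdyn, Finset.prod_filter, Fin.sum_univ_three, Fin.prod_univ_three]
  have VL2 : ∀ p : Fin 3 → ℝ, VLdyn A p 2 = (penalty A p 0 * penalty A p 1) /
      (penalty A p 1 * penalty A p 2 + penalty A p 0 * penalty A p 2 +
        penalty A p 0 * penalty A p 1) := by
    intro p; simp [VLdyn, Finset.prod_filter, Fin.sum_univ_three, Fin.prod_univ_three]
  intro i
  fin_cases i
  · refine vertex_unstable a b c ha hb hc _ 0 1 2 (by decide) (by decide) (by decide)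
      (by decide) ?_ ?_ ?_ <;> intro p _
    · rw [VL0 p, pen0 p, pen1 p, pen2 p]
    · rw [VL1 p, pen0 p, pen1 p, pen2 p]
    · rw [VL2 p, pen0 p, pen1 p, pen2 p]
  · refine vertex_unstable a c b ha hc hb _ 1 0 2 (by decide) (by decide) (by decide)
      (by decide) ?_ ?_ ?_ <;> intro p _
    · rw [VL1 p, pen0 p, pen1 p, pen2 p]; congr 1 <;> ring
    · rw [VL0 p, pen0 p, pen1 p, pen2 p]; congr 1 <;> ring
    · rw [VL2 p, pen0 p, pen1 p, pen2 p]; congr 1 <;> ring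
  · refine vertex_unstable b c a hb hc ha _ 2 0 1 (by decide) (by decide) (by decide)
      (by decide) ?_ ?_ ?_ <;> intro p _
    · rw [VL2 p, pen0 p, pen1 p, pen2 p]; congr 1 <;> ring
    · rw [VL0 p, pen0 p, pen1 p, pen2 p]; congr 1 <;> ring
    · rw [VL1 p, pen0 p, pen1 p, pen2 p]; congr 1 <;> ring
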